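/- Under the hypotheses of the previous statement, if furthermore there exist constants $r_2,\dots,r_{n+1}>0$ with $|\partial_{x_{i-1}} w_0^{(i)}(x)| \ge r_{i-1}$ for $3\le i\le n+1$ and $|\partial_{x_1}w_0^{(2)}\partial^2_{x_1x_1}w_0^{(n+2)} - \partial^2_{x_1x_1}w_0^{(2)}\partial_{x_1}w_0^{(n+2)}| \ge r_{n+1} > 0$ on $\Omega$, then there exists $r_0>0$ such that $|\det W(x)| \ge r_0$ for all $x\in\Omega$. -/

import Mathlib

open MeasureTheory Real Filter

/-- Partial derivative `∂f/∂x_j` of a real-valued function on `ℝⁿ`. -/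
noncomputable def pd {n : ℕ} (j : Fin n) (f : EuclideanSpace ℝ (Fin n) → ℝ)
    (x : EuclideanSpace ℝ (Fin n)) : ℝ :=
  fderiv ℝ f x (EuclideanSpace.single j 1)

/-- Euclidean Laplacian `Δf = ∑ⱼ ∂²f/∂x_j²`. -/
noncomputable def lapl {n : ℕ} (f : EuclideanSpace ℝ (Fin n) → ℝ)
    (x : EuclideanSpace ℝ (Fin n)) : ℝ :=
  ∑ j, pd j (fun y => pd j f y) x

/-- The `(n+2) × (n+2)` matrix whose `i`-th row is
`(w_i(x), ∂₁ w_i(x), …, ∂ₙ w_i(x), Δ w_i(x))`. -/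
noncomputable def Wmat {n : ℕ} (w : Fin (n + 2) → EuclideanSpace ℝ (Fin n) → ℝ)
    (x : EuclideanSpace ℝ (Fin n)) : Matrix (Fin (n + 2)) (Fin (n + 2)) ℝ :=
  fun i j =>
    if hj : (j : ℕ) = 0 then w i x
    else if hj' : (j : ℕ) ≤ n then pd ⟨(j : ℕ) - 1, by omega⟩ (w i) x
    else lapl (w i) x

lemma pd_const {m : ℕ} (j : Fin m) (c : ℝ) (x : EuclideanSpace ℝ (Fin m)) :
    pd j (fun _ => c) x = 0 := by
  simp [pd]

lemma pd_zero_of_indep {m : ℕ} {f : EuclideanSpace ℝ (Fin m) → ℝ} (hf : Differentiable ℝ f)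
    {j : Fin m} (h : ∀ x y : EuclideanSpace ℝ (Fin m), (∀ k, k ≠ j → x k = y k) → f x = f y)
    (x : EuclideanSpace ℝ (Fin m)) : pd j f x = 0 := by
  have hline : ∀ t : ℝ, f (x + t • (EuclideanSpace.single j 1 : EuclideanSpace ℝ (Fin m))) = f x := by
    intro t
    apply h
    intro k hk
    simp [PiLp.add_apply, PiLp.smul_apply, EuclideanSpace.single_apply, hk]
  have hc : HasDerivAt (fun t : ℝ => x + t • (EuclideanSpace.single j 1 : EuclideanSpace ℝ (Fin m)))
      (EuclideanSpace.single j 1) 0 := by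
    simpa using ((hasDerivAt_id (0 : ℝ)).smul_const
      (EuclideanSpace.single j 1 : EuclideanSpace ℝ (Fin m))).const_add x
  have hfd : HasFDerivAt f (fderiv ℝ f x)
      ((fun t : ℝ => x + t • (EuclideanSpace.single j 1 : EuclideanSpace ℝ (Fin m))) 0) := by
    simpa using (hf x).hasFDerivAt
  have h2 := hfd.comp_hasDerivAt 0 hc
  have h3 : (fun t : ℝ => f (x + t • (EuclideanSpace.single j 1 : EuclideanSpace ℝ (Fin m))))
      = fun _ => f x := funext hline
  rw [Function.comp_def, h3] at h2
  have h4 := h2.unique (hasDerivAt_const 0 (f x))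
  simpa [pd] using h4

theorem stmt_3 (n : ℕ) (hn : 1 ≤ n) (Ω : Set (EuclideanSpace ℝ (Fin n)))
    (w : Fin (n + 2) → EuclideanSpace ℝ (Fin n) → ℝ)
    (hsm : ∀ i, ContDiff ℝ 2 (w i))
    (hw1 : ∀ x, w 0 x = 1)
    (hdep : ∀ i : Fin (n + 2), 1 ≤ (i : ℕ) → (i : ℕ) ≤ n → ∀ x y,
      (∀ j : Fin n, (j : ℕ) < (i : ℕ) → x j = y j) → w i x = w i y)
    (hlast : ∀ x y : EuclideanSpace ℝ (Fin n),
      x ⟨0, hn⟩ = y ⟨0, hn⟩ → w (Fin.last (n + 1)) x = w (Fin.last (n + 1)) y)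
    (r : ℕ → ℝ)
    (hr : ∀ i : Fin (n + 2), ∀ h2 : 2 ≤ (i : ℕ), ∀ h3 : (i : ℕ) ≤ n,
      0 < r (i : ℕ) ∧ ∀ x ∈ Ω, r (i : ℕ) ≤ |pd ⟨(i : ℕ) - 1, by omega⟩ (w i) x|)
    (rb : ℝ) (hrb : 0 < rb)
    (hbr : ∀ x ∈ Ω, rb ≤
      |pd ⟨0, hn⟩ (w 1) x * pd ⟨0, hn⟩ (fun y => pd ⟨0, hn⟩ (w (Fin.last (n + 1))) y) x
        - pd ⟨0, hn⟩ (fun y => pd ⟨0, hn⟩ (w 1) y) x * pd ⟨0, hn⟩ (w (Fin.last (n + 1))) x|) :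
    ∃ r0 > 0, ∀ x ∈ Ω, r0 ≤ |(Wmat w x).det| := by
  have hdiff : ∀ i, Differentiable ℝ (w i) := fun i => (hsm i).differentiable two_ne_zero
  -- row 0 facts
  have hw0 : w 0 = fun _ => (1 : ℝ) := funext hw1
  have hpd0 : ∀ (j : Fin n) (x), pd j (w 0) x = 0 := by
    intro j x; rw [hw0]; exact pd_const _ _ _
  have hlapl0 : ∀ x, lapl (w 0) x = 0 := by
    intro x
    unfold lapl
    apply Finset.sum_eq_zero
    intro j _
    have hz : (fun y => pd j (w 0) y) = fun _ => (0 : ℝ) := funext (hpd0 j)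
    rw [hz]; exact pd_const _ _ _
  -- middle rows: pd j (w i) = 0 when i ≤ j
  have hpd_mid : ∀ (i : Fin (n + 2)), 1 ≤ (i : ℕ) → (i : ℕ) ≤ n → ∀ (j : Fin n),
      (i : ℕ) ≤ (j : ℕ) → ∀ x, pd j (w i) x = 0 := by
    intro i h1 h2 j hij x
    apply pd_zero_of_indep (hdiff i) (fun a b hab =>
      hdep i h1 h2 a b (fun k hk => hab k (Fin.ne_of_val_ne (by omega)))) x
  -- last row
  have hpd_last : ∀ (j : Fin n), (j : ℕ) ≠ 0 → ∀ x, pd j (w (Fin.last (n + 1))) x = 0 := by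
    intro j hj x
    apply pd_zero_of_indep (hdiff _) (fun a b hab =>
      hlast a b (hab _ (Fin.ne_of_val_ne (by simpa using fun h => hj h.symm)))) x
  -- w 1 depends only on coordinate 0
  have hval1 : ((1 : Fin (n + 2)) : ℕ) = 1 := rfl
  have hpd_one : ∀ (j : Fin n), (j : ℕ) ≠ 0 → ∀ x, pd j (w 1) x = 0 := by
    intro j hj x
    exact hpd_mid 1 (by omega) (by omega) j (by omega) x
  -- Laplacian reduction
  have hlapl_single : ∀ (f : EuclideanSpace ℝ (Fin n) → ℝ),
      (∀ (j : Fin n), (j : ℕ) ≠ 0 → ∀ y, pd j f y = 0) → ∀ x,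
      lapl f x = pd ⟨0, hn⟩ (fun y => pd ⟨0, hn⟩ f y) x := by
    intro f hf x
    unfold lapl
    apply Fintype.sum_eq_single
    intro j hj
    have hjv : (j : ℕ) ≠ 0 := fun h => hj (Fin.ext h)
    have hz : (fun y => pd j f y) = fun _ => (0 : ℝ) := funext (hf j hjv)
    rw [hz]; exact pd_const _ _ _
  have hlapl1 : ∀ x, lapl (w 1) x = pd ⟨0, hn⟩ (fun y => pd ⟨0, hn⟩ (w 1) y) x :=
    hlapl_single (w 1) hpd_one
  have hlapll : ∀ x, lapl (w (Fin.last (n + 1))) x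
      = pd ⟨0, hn⟩ (fun y => pd ⟨0, hn⟩ (w (Fin.last (n + 1))) y) x :=
    hlapl_single _ hpd_last
  -- Wmat entry lemmas
  have hWcol0 : ∀ x (i : Fin (n + 2)), Wmat w x i 0 = w i x := by
    intro x i; simp [Wmat]
  have hWcolmid : ∀ x (i j : Fin (n + 2)) (h1 : (j : ℕ) ≠ 0) (h2 : (j : ℕ) ≤ n),
      Wmat w x i j = pd ⟨(j : ℕ) - 1, by omega⟩ (w i) x := by
    intro x i j h1 h2; simp [Wmat, h1, h2]
  have hWcollast : ∀ x (i j : Fin (n + 2)), ¬ ((j : ℕ) ≤ n) → Wmat w x i j = lapl (w i) x := by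
    intro x i j h1; simp [Wmat, h1]; intro h; simp [h] at h1
  -- the reindexing bijection
  let g : Fin (n - 1) ⊕ Fin 3 → Fin (n + 2) :=
    Sum.elim (fun a => ⟨(a : ℕ) + 2, by have := a.isLt; omega⟩)
      (fun b => ⟨if (b : ℕ) = 2 then n + 1 else (b : ℕ), by have := b.isLt; split <;> omega⟩)
  have hginj : Function.Injective g := by
    intro u v huv
    have hv := congrArg Fin.val huv
    rcases u with a | b <;> rcases v with a' | b' <;>
      simp only [g, Sum.elim_inl, Sum.elim_inr] at hv
    · exact congrArg Sum.inl (Fin.ext (by omega))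
    · exfalso; have h1 := a.isLt; have h2 := b'.isLt; split_ifs at hv <;> omega
    · exfalso; have h1 := a'.isLt; have h2 := b.isLt; split_ifs at hv <;> omega
    · refine congrArg Sum.inr (Fin.ext ?_)
      have h1 := b.isLt; have h2 := b'.isLt; split_ifs at hv <;> omega
  have hgbij : Function.Bijective g :=
    (Fintype.bijective_iff_injective_and_card g).2 ⟨hginj, by simp; omega⟩
  let e : (Fin (n - 1) ⊕ Fin 3) ≃ Fin (n + 2) := Equiv.ofBijective g hgbij
  have hg0 : g (Sum.inr 0) = 0 := by
    apply Fin.ext; simp [g]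
  have hg1 : g (Sum.inr 1) = 1 := by
    apply Fin.ext; simp [g]
  have hg2 : g (Sum.inr 2) = Fin.last (n + 1) := by
    apply Fin.ext; simp [g]
  -- determinant formula
  have hdet : ∀ x, (Wmat w x).det =
      (∏ a : Fin (n - 1), pd ⟨(a : ℕ) + 1, by have := a.isLt; omega⟩
        (w ⟨(a : ℕ) + 2, by have := a.isLt; omega⟩) x) *
      (pd ⟨0, hn⟩ (w 1) x * pd ⟨0, hn⟩ (fun y => pd ⟨0, hn⟩ (w (Fin.last (n + 1))) y) x
        - pd ⟨0, hn⟩ (fun y => pd ⟨0, hn⟩ (w 1) y) x * pd ⟨0, hn⟩ (w (Fin.last (n + 1))) x) := by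
    intro x
    rw [← Matrix.det_submatrix_equiv_self e (Wmat w x)]
    have hsub : (Wmat w x).submatrix e e = Matrix.fromBlocks
        (fun (a b : Fin (n - 1)) => pd ⟨(b : ℕ) + 1, by have := b.isLt; omega⟩
          (w ⟨(a : ℕ) + 2, by have := a.isLt; omega⟩) x)
        (fun (a : Fin (n - 1)) (b : Fin 3) => Wmat w x (g (Sum.inl a)) (g (Sum.inr b)))
        0
        (fun (a b : Fin 3) => Wmat w x (g (Sum.inr a)) (g (Sum.inr b))) := by
      ext i j
      rcases i with a | a <;> rcases j with b | b
      · -- middle block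
        show Wmat w x (g (Sum.inl a)) (g (Sum.inl b)) = _
        rw [hWcolmid x _ _ (by simp [g]) (by simp [g]; have := b.isLt; omega)]
        rfl
      · rfl
      · -- zero block
        show Wmat w x (g (Sum.inr a)) (g (Sum.inl b)) = 0
        rw [hWcolmid x _ _ (by simp [g]) (by simp [g]; have := b.isLt; omega)]
        fin_cases a
        · change pd _ (w (g (Sum.inr 0))) x = 0; rw [hg0]; exact hpd0 _ x
        · change pd _ (w (g (Sum.inr 1))) x = 0; rw [hg1]; exact hpd_one _ (by simp only [g, Sum.elim_inl, Fin.val_mk]; omega) x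
        · change pd _ (w (g (Sum.inr 2))) x = 0; rw [hg2]; exact hpd_last _ (by simp only [g, Sum.elim_inl, Fin.val_mk]; omega) x
      · rfl
    rw [hsub]; refine (Matrix.det_fromBlocks_zero₂₁ _ _ _).trans ?_
    congr 1
    · -- lower triangular middle block
      refine (Matrix.det_of_lowerTriangular _ ?_).trans rfl
      intro i j hij
      have hij' : (i : Fin (n-1)) < j := hij
      exact hpd_mid ⟨(i : ℕ) + 2, by have := i.isLt; omega⟩ (by simp)
        (by simp; have := i.isLt; omega) _ (by simp; omega) x
    · -- 3×3 block
      refine (Matrix.det_fin_three _).trans ?_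
      have e00 : Wmat w x (g (Sum.inr 0)) (g (Sum.inr 0)) = 1 := by
        rw [hg0, hWcol0]; exact hw1 x
      have e01 : Wmat w x (g (Sum.inr 0)) (g (Sum.inr 1)) = 0 := by
        rw [hg0, hg1, hWcolmid x _ _ (by simp) (by simp; omega)]
        exact hpd0 _ x
      have e02 : Wmat w x (g (Sum.inr 0)) (g (Sum.inr 2)) = 0 := by
        rw [hg0, hg2, hWcollast x _ _ (by simp [Fin.val_last])]
        exact hlapl0 x
      have e11 : Wmat w x (g (Sum.inr 1)) (g (Sum.inr 1)) = pd ⟨0, hn⟩ (w 1) x := by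
        rw [hg1, hWcolmid x _ _ (by simp) (by simp; omega)]
        congr 1
      have e12 : Wmat w x (g (Sum.inr 1)) (g (Sum.inr 2))
          = pd ⟨0, hn⟩ (fun y => pd ⟨0, hn⟩ (w 1) y) x := by
        rw [hg1, hg2, hWcollast x _ _ (by simp [Fin.val_last])]
        exact hlapl1 x
      have e21 : Wmat w x (g (Sum.inr 2)) (g (Sum.inr 1))
          = pd ⟨0, hn⟩ (w (Fin.last (n + 1))) x := by
        rw [hg1, hg2, hWcolmid x _ _ (by simp) (by simp; omega)]
        congr 1
      have e22 : Wmat w x (g (Sum.inr 2)) (g (Sum.inr 2))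
          = pd ⟨0, hn⟩ (fun y => pd ⟨0, hn⟩ (w (Fin.last (n + 1))) y) x := by
        rw [hg2, hWcollast x _ _ (by simp [Fin.val_last])]
        exact hlapll x
      rw [e00, e01, e02, e11, e12, e21, e22]
      ring
  -- now the bound
  refine ⟨(∏ a : Fin (n - 1), r ((a : ℕ) + 2)) * rb, ?_, ?_⟩
  · apply mul_pos _ hrb
    apply Finset.prod_pos
    intro a _
    exact (hr ⟨(a : ℕ) + 2, by have := a.isLt; omega⟩ (by simp) (by simp; have := a.isLt; omega)).1
  · intro x hx
    rw [hdet x, abs_mul, Finset.abs_prod]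
    apply mul_le_mul
    · apply Finset.prod_le_prod
      · intro a _
        exact le_of_lt (hr ⟨(a : ℕ) + 2, by have := a.isLt; omega⟩ (by simp)
          (by simp; have := a.isLt; omega)).1
      · intro a _
        exact (hr ⟨(a : ℕ) + 2, by have := a.isLt; omega⟩ (by simp)
          (by simp; have := a.isLt; omega)).2 x hx
    · exact hbr x hx
    · exact le_of_lt hrb
    · exact Finset.prod_nonneg fun a _ => abs_nonneg _
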